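/- For all real x ≥ 2 and y ≥ 2, |QNC(x, y)| ≤ (1/2) · (x^{-y} + y^{-x}). -/

import Mathlib

open Real

/-- `F(x,y) = ∑_{k=1}^∞ x^{k-1} · y^{-x^k} / (1 - y^{-x^k})²`. -/
noncomputable def F (x y : ℝ) : ℝ :=
  ∑' k : ℕ, x ^ (k : ℝ) * y ^ (-(x ^ ((k : ℝ) + 1))) / (1 - y ^ (-(x ^ ((k : ℝ) + 1)))) ^ 2

/-- `QNC(x,y) = (1/(12xy)) · ( x(y-1)F(x,y) - y(x-1)F(y,x) )`. -/
noncomputable def QNC (x y : ℝ) : ℝ :=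
  1 / (12 * x * y) * (x * (y - 1) * F x y - y * (x - 1) * F y x)

lemma ratio_le (x y : ℝ) (hx : 2 ≤ x) (hy : 2 ≤ y) : x * y ^ (-x) ≤ 1/2 := by
  have hx0 : (0:ℝ) < x := by linarith
  have hy0 : (0:ℝ) < y := by linarith
  have h1 : y ^ (-x) ≤ (2:ℝ) ^ (-x) := by
    rw [Real.rpow_neg hy0.le, Real.rpow_neg (by norm_num : (0:ℝ) ≤ 2)]
    exact inv_anti₀ (Real.rpow_pos_of_pos two_pos x) (Real.rpow_le_rpow (by norm_num) hy hx0.le)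
  have h2 : 2 * x ≤ (2:ℝ) ^ x := by
    have e1 : (2:ℝ) ^ x = 2 ^ (x - 2) * 2 ^ (2:ℝ) := by
      rw [← Real.rpow_add two_pos]; ring_nf
    have e2 : (2:ℝ) ^ (x - 2) = Real.exp ((x - 2) * Real.log 2) := by
      rw [Real.rpow_def_of_pos two_pos]; ring_nf
    have hl : (0.6931471803 : ℝ) < Real.log 2 := Real.log_two_gt_d9
    have e4 : (2:ℝ) ^ (2:ℝ) = 4 := by
      rw [show (2:ℝ) = ((2:ℕ):ℝ) by norm_num, Real.rpow_natCast]; norm_num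
    rw [e1, e2, e4]
    nlinarith [Real.add_one_le_exp ((x - 2) * Real.log 2)]
  have h3 : x * (2:ℝ) ^ (-x) ≤ 1/2 := by
    rw [Real.rpow_neg (by norm_num : (0:ℝ) ≤ 2)]
    rw [mul_inv_le_iff₀ (Real.rpow_pos_of_pos two_pos x)]
    nlinarith [Real.rpow_pos_of_pos (show (0:ℝ)<2 by norm_num) x]
  calc x * y ^ (-x) ≤ x * (2:ℝ) ^ (-x) := mul_le_mul_of_nonneg_left h1 hx0.le
    _ ≤ 1/2 := h3

lemma term_nonneg (x y : ℝ) (hx : 2 ≤ x) (hy : 2 ≤ y) (k : ℕ) :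
    0 ≤ x ^ (k : ℝ) * y ^ (-(x ^ ((k : ℝ) + 1))) / (1 - y ^ (-(x ^ ((k : ℝ) + 1)))) ^ 2 :=
  div_nonneg (mul_nonneg (Real.rpow_nonneg (by linarith) _) (Real.rpow_nonneg (by linarith) _))
    (sq_nonneg _)

lemma term_le (x y : ℝ) (hx : 2 ≤ x) (hy : 2 ≤ y) (k : ℕ) :
    x ^ (k : ℝ) * y ^ (-(x ^ ((k : ℝ) + 1))) / (1 - y ^ (-(x ^ ((k : ℝ) + 1)))) ^ 2
      ≤ 16/9 * ((1/2:ℝ)^k * y ^ (-x)) := by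
  have hx0 : (0:ℝ) < x := by linarith
  have hy0 : (0:ℝ) < y := by linarith
  set a : ℝ := x ^ ((k : ℝ) + 1) with ha
  set t : ℝ := y ^ (-a) with ht
  have ha2 : 2 ≤ a := by
    calc (2:ℝ) ≤ x := hx
      _ = x ^ (1:ℝ) := (Real.rpow_one x).symm
      _ ≤ a := Real.rpow_le_rpow_of_exponent_le (by linarith)
          (by have := Nat.cast_nonneg (α := ℝ) k; linarith)
  have ht0 : 0 < t := Real.rpow_pos_of_pos hy0 _
  have ht4 : t ≤ 1/4 := by
    have s1 : t ≤ y ^ (-(2:ℝ)) :=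
      Real.rpow_le_rpow_of_exponent_le (by linarith) (by linarith)
    have s2 : y ^ (-(2:ℝ)) ≤ (2:ℝ) ^ (-(2:ℝ)) := by
      rw [Real.rpow_neg hy0.le, Real.rpow_neg (by norm_num : (0:ℝ) ≤ 2)]
      exact inv_anti₀ (Real.rpow_pos_of_pos two_pos _) (Real.rpow_le_rpow (by norm_num) hy (by norm_num))
    have s3 : (2:ℝ) ^ (-(2:ℝ)) = 1/4 := by
      rw [show (-(2:ℝ)) = ((-2:ℤ):ℝ) by norm_num, Real.rpow_intCast]; norm_num
    exact s3 ▸ s1.trans s2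
  have hden : (9:ℝ)/16 ≤ (1 - t) ^ 2 := by nlinarith
  have hnum_nonneg : 0 ≤ x ^ (k:ℝ) * t :=
    mul_nonneg (Real.rpow_nonneg hx0.le _) ht0.le
  have step1 : x ^ (k:ℝ) * t / (1 - t) ^ 2 ≤ x ^ (k:ℝ) * t / (9/16) :=
    div_le_div_of_nonneg_left hnum_nonneg (by norm_num) hden
  have hxk : x ^ (k:ℝ) = x ^ k := Real.rpow_natCast x k
  -- a ≥ x * (k+1)
  have hk1 : ((k:ℝ) + 1) ≤ x ^ k := by
    have n1' : ((k:ℝ) + 1) ≤ (2:ℝ) ^ k := by exact_mod_cast Nat.succ_le_of_lt (Nat.lt_two_pow_self (n := k))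
    calc ((k:ℝ) + 1) ≤ (2:ℝ) ^ k := n1'
      _ ≤ x ^ k := pow_le_pow_left₀ (by norm_num) hx k
  have hax : x * ((k:ℝ) + 1) ≤ a := by
    have : a = x ^ (k:ℝ) * x := by
      rw [ha, Real.rpow_add hx0, Real.rpow_one]
    rw [this, hxk]
    nlinarith
  have step2 : t ≤ y ^ (-(x * ((k:ℝ)+1))) :=
    Real.rpow_le_rpow_of_exponent_le (by linarith) (by linarith)
  have hsplit : y ^ (-(x * ((k:ℝ)+1))) = (y ^ (-x)) ^ (k+1) := by
    rw [← Real.rpow_natCast (y ^ (-x)) (k+1), ← Real.rpow_mul hy0.le]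
    push_cast
    ring_nf
  have hr2 : x * y ^ (-x) ≤ 1/2 := ratio_le x y hx hy
  have hr0 : 0 ≤ x * y ^ (-x) := mul_nonneg hx0.le (Real.rpow_nonneg hy0.le _)
  have hpow : (x * y ^ (-x)) ^ k ≤ (1/2:ℝ) ^ k := pow_le_pow_left₀ hr0 hr2 k
  have step3 : x ^ (k:ℝ) * t ≤ (1/2:ℝ)^k * y ^ (-x) := by
    calc x ^ (k:ℝ) * t ≤ x ^ (k:ℝ) * y ^ (-(x * ((k:ℝ)+1))) :=
          mul_le_mul_of_nonneg_left step2 (Real.rpow_nonneg hx0.le _)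
      _ = (x * y ^ (-x)) ^ k * y ^ (-x) := by
          rw [hsplit, hxk, mul_pow, pow_succ]; ring
      _ ≤ (1/2:ℝ)^k * y ^ (-x) := by
          exact mul_le_mul_of_nonneg_right hpow (Real.rpow_nonneg hy0.le _)
  calc x ^ (k:ℝ) * t / (1 - t) ^ 2 ≤ x ^ (k:ℝ) * t / (9/16) := step1
    _ = 16/9 * (x ^ (k:ℝ) * t) := by ring
    _ ≤ 16/9 * ((1/2:ℝ)^k * y ^ (-x)) := by linarith

lemma F_nonneg (x y : ℝ) (hx : 2 ≤ x) (hy : 2 ≤ y) : 0 ≤ F x y :=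
  tsum_nonneg (term_nonneg x y hx hy)

lemma F_le (x y : ℝ) (hx : 2 ≤ x) (hy : 2 ≤ y) : F x y ≤ 32/9 * y ^ (-x) := by
  have hg : Summable (fun k : ℕ => 16/9 * ((1/2:ℝ)^k * y ^ (-x))) := by
    apply Summable.mul_left
    exact (summable_geometric_of_lt_one (by norm_num) (by norm_num)).mul_right _
  have hf : Summable (fun k : ℕ =>
      x ^ (k : ℝ) * y ^ (-(x ^ ((k : ℝ) + 1))) / (1 - y ^ (-(x ^ ((k : ℝ) + 1)))) ^ 2) :=
    Summable.of_nonneg_of_le (term_nonneg x y hx hy) (term_le x y hx hy) hg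
  have := Summable.tsum_le_tsum (term_le x y hx hy) hf hg
  refine this.trans ?_
  rw [tsum_mul_left, tsum_mul_right, tsum_geometric_of_lt_one (by norm_num) (by norm_num)]
  rw [show ((1:ℝ) - 1/2)⁻¹ = 2 by norm_num]
  linarith

/-- For all real `x ≥ 2` and `y ≥ 2`,
`|QNC(x,y)| ≤ (1/2)(x^{-y} + y^{-x})`. -/
theorem abs_QNC_le (x y : ℝ) (hx : 2 ≤ x) (hy : 2 ≤ y) :
    |QNC x y| ≤ 1 / 2 * (x ^ (-y) + y ^ (-x)) := by
  have hx0 : (0:ℝ) < x := by linarith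
  have hy0 : (0:ℝ) < y := by linarith
  have hA0 : 0 ≤ x * (y - 1) * F x y :=
    mul_nonneg (mul_nonneg hx0.le (by linarith)) (F_nonneg x y hx hy)
  have hB0 : 0 ≤ y * (x - 1) * F y x :=
    mul_nonneg (mul_nonneg hy0.le (by linarith)) (F_nonneg y x hy hx)
  have hA : x * (y - 1) * F x y ≤ x * y * (32/9 * y ^ (-x)) := by
    have := F_le x y hx hy
    have h1 : x * (y-1) ≤ x * y := by nlinarith
    nlinarith [F_nonneg x y hx hy, mul_nonneg hx0.le (show (0:ℝ) ≤ y - 1 by linarith)]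
  have hB : y * (x - 1) * F y x ≤ x * y * (32/9 * x ^ (-y)) := by
    have := F_le y x hy hx
    nlinarith [F_nonneg y x hy hx, mul_nonneg hy0.le (show (0:ℝ) ≤ x - 1 by linarith)]
  have habs : |x * (y - 1) * F x y - y * (x - 1) * F y x|
      ≤ x * y * (32/9 * y ^ (-x)) + x * y * (32/9 * x ^ (-y)) := by
    rw [abs_sub_le_iff]
    constructor <;> nlinarith
  rw [QNC, abs_mul, abs_of_nonneg (show (0:ℝ) ≤ 1/(12*x*y) by positivity)]
  have hinv : 1/(12*x*y) * (x * y * (32/9 * y ^ (-x)) + x * y * (32/9 * x ^ (-y)))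
      = 8/27 * (y ^ (-x) + x ^ (-y)) := by
    field_simp
    ring
  calc 1/(12*x*y) * |x * (y - 1) * F x y - y * (x - 1) * F y x|
      ≤ 1/(12*x*y) * (x * y * (32/9 * y ^ (-x)) + x * y * (32/9 * x ^ (-y))) :=
        mul_le_mul_of_nonneg_left habs (by positivity)
    _ = 8/27 * (y ^ (-x) + x ^ (-y)) := hinv
    _ ≤ 1/2 * (x ^ (-y) + y ^ (-x)) := by
        nlinarith [Real.rpow_nonneg hx0.le (-y), Real.rpow_nonneg hy0.le (-x)]
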